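/- Vidal's concavity criterion for pure-state entanglement monotones. Let a and b be finite nonempty types (party A and the complementary parties B), let ψ : a × b → ℂ be a unit vector (∑ x, ‖ψ x‖² = 1), and let ρ = vecMulVec ψ (star ψ) ∈ Matrix (a × b) (a × b) ℂ be its rank-one density matrix. Let ι be a finite type and E : ι → Matrix a a ℂ a trace-preserving Kraus family, ∑ i, (E i)ᴴ * (E i) = 1. For each i set ρ_i = ((E i) ⊗ₖ (1 : Matrix b b ℂ)) * ρ * ((E i) ⊗ₖ 1)ᴴ and p_i = (ρ_i.trace).re. Let f : Matrix b b ℂ → ℝ be concave on the set {σ | σ.PosSemidef ∧ σ.trace = 1}. Then ∑ over those i with p_i ≠ 0 of p_i * f ((p_i)⁻¹ • ptrA(ρ_i)) ≤ f (ptrA(ρ)), where ptrA(M) ∈ Matrix b b ℂ is the partial trace over a, ptrA(M) j j' = ∑ i : a, M (i, j) (i, j'). -/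

import Mathlib

open Matrix Kronecker ComplexOrder

/-- Partial trace over the first factor `a`:
`ptrA M j j' = ∑ i : a, M (i, j) (i, j')`. -/
noncomputable def ptrA {a b : Type*} [Fintype a] (M : Matrix (a × b) (a × b) ℂ) :
    Matrix b b ℂ :=
  Matrix.of fun j j' => ∑ i : a, M (i, j) (i, j')

section Aux

variable {a b : Type*} [Fintype a] [Fintype b] [DecidableEq a] [DecidableEq b]

set_option linter.unusedSectionVars false

lemma ptrA_apply (M : Matrix (a × b) (a × b) ℂ) (j j' : b) :
    ptrA M j j' = ∑ i : a, M (i, j) (i, j') := rfl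

lemma ptrA_zero : ptrA (0 : Matrix (a × b) (a × b) ℂ) = 0 := by
  ext j j'; simp [ptrA_apply]

lemma ptrA_trace (M : Matrix (a × b) (a × b) ℂ) : (ptrA M).trace = M.trace := by
  simp only [Matrix.trace, Matrix.diag, ptrA_apply, ← Finset.univ_product_univ,
    Finset.sum_product]
  exact Finset.sum_comm

lemma ptrA_sum {ι : Type*} (s : Finset ι) (M : ι → Matrix (a × b) (a × b) ℂ) :
    ptrA (∑ i ∈ s, M i) = ∑ i ∈ s, ptrA (M i) := by
  ext j j'
  simp only [ptrA_apply, Finset.sum_apply, Matrix.sum_apply]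
  exact Finset.sum_comm

/-- `M * |u⟩⟨u| * Mᴴ = |Mu⟩⟨Mu|`. -/
lemma mul_vecMulVec_star {m n : Type*} [Fintype n] (M : Matrix m n ℂ) (u : n → ℂ) :
    M * Matrix.vecMulVec u (star u) * Mᴴ
      = Matrix.vecMulVec (M *ᵥ u) (star (M *ᵥ u)) := by
  ext x y
  simp only [Matrix.mul_apply, Matrix.vecMulVec_apply, Matrix.conjTranspose_apply,
    Matrix.mulVec, dotProduct, Pi.star_apply, star_sum, star_mul']
  rw [Finset.sum_mul_sum]
  rw [Finset.sum_comm]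
  refine Finset.sum_congr rfl fun l _ => ?_
  rw [Finset.sum_mul]
  refine Finset.sum_congr rfl fun k _ => ?_
  ring

lemma posSemidef_ptrA_vecMulVec (φ : a × b → ℂ) :
    (ptrA (Matrix.vecMulVec φ (star φ))).PosSemidef := by
  refine Matrix.posSemidef_iff_dotProduct_mulVec.mpr ⟨?_, ?_⟩
  · ext j j'
    simp only [Matrix.conjTranspose_apply, ptrA_apply, Matrix.vecMulVec_apply,
      Pi.star_apply, star_sum, star_mul', star_star]
    refine Finset.sum_congr rfl fun i _ => ?_
    ring
  · intro x
    have key : dotProduct (star x) ((ptrA (Matrix.vecMulVec φ (star φ))) *ᵥ x)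
        = ∑ i : a, (∑ j, star (x j) * φ (i, j)) * star (∑ j, star (x j) * φ (i, j)) := by
      calc dotProduct (star x) ((ptrA (Matrix.vecMulVec φ (star φ))) *ᵥ x)
          = ∑ j, ∑ i, ∑ j', star (x j) * φ (i, j) * (star (φ (i, j')) * x j') := by
            simp only [dotProduct, Matrix.mulVec, ptrA_apply,
              Matrix.vecMulVec_apply, Pi.star_apply, Finset.sum_mul, Finset.mul_sum]
            refine Finset.sum_congr rfl fun j _ => ?_
            rw [Finset.sum_comm]
            refine Finset.sum_congr rfl fun i _ => ?_
            refine Finset.sum_congr rfl fun j' _ => ?_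
            ring
        _ = ∑ i, ∑ j, ∑ j', star (x j) * φ (i, j) * (star (φ (i, j')) * x j') :=
            Finset.sum_comm
        _ = ∑ i : a, (∑ j, star (x j) * φ (i, j)) * star (∑ j, star (x j) * φ (i, j)) := by
            refine Finset.sum_congr rfl fun i _ => ?_
            rw [star_sum]
            simp only [star_mul', star_star]
            rw [Finset.sum_mul_sum]
            refine Finset.sum_congr rfl fun j _ => ?_
            refine Finset.sum_congr rfl fun j' _ => ?_
            ring
    rw [key]
    exact Finset.sum_nonneg fun i _ => mul_star_self_nonneg _

lemma kronecker_one_conjTranspose (X : Matrix a a ℂ) :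
    (X ⊗ₖ (1 : Matrix b b ℂ))ᴴ = Xᴴ ⊗ₖ (1 : Matrix b b ℂ) := by
  ext ⟨i, j⟩ ⟨i', j'⟩
  simp only [Matrix.conjTranspose_apply, Matrix.kroneckerMap_apply, star_mul',
    Matrix.one_apply]
  by_cases h : j = j'
  · subst h; simp [mul_comm]
  · have h' : ¬ j' = j := fun hh => h hh.symm
    simp [h, h']

lemma sum_kronecker_one {ι : Type*} (s : Finset ι) (X : ι → Matrix a a ℂ) :
    (∑ i ∈ s, X i) ⊗ₖ (1 : Matrix b b ℂ) = ∑ i ∈ s, (X i ⊗ₖ (1 : Matrix b b ℂ)) := by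
  ext ⟨i, j⟩ ⟨i', j'⟩
  simp [Matrix.kroneckerMap_apply, Matrix.sum_apply, Finset.sum_mul]

/-- Cyclicity of the partial trace in the `a` factor. -/
lemma ptrA_kronecker_one_mul_comm (X : Matrix a a ℂ) (N : Matrix (a × b) (a × b) ℂ) :
    ptrA ((X ⊗ₖ (1 : Matrix b b ℂ)) * N) = ptrA (N * (X ⊗ₖ (1 : Matrix b b ℂ))) := by
  ext j j'
  simp only [ptrA_apply, Matrix.mul_apply, Matrix.kroneckerMap_apply, Matrix.one_apply,
    ← Finset.univ_product_univ, Finset.sum_product]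
  simp only [mul_ite, mul_one, mul_zero, ite_mul, zero_mul, one_mul,
    Finset.sum_ite_eq, Finset.sum_ite_eq', Finset.mem_univ, if_true]
  rw [Finset.sum_comm]
  refine Finset.sum_congr rfl fun α _ => ?_
  refine Finset.sum_congr rfl fun β _ => ?_
  ring

lemma posSemidef_real_smul {M : Matrix b b ℂ} (hM : M.PosSemidef) {c : ℝ} (hc : 0 ≤ c) :
    (c • M).PosSemidef := by
  refine Matrix.posSemidef_iff_dotProduct_mulVec.mpr ⟨?_, ?_⟩
  · show (c • M)ᴴ = c • M
    rw [Matrix.conjTranspose_smul, star_trivial, hM.1]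
  · intro x
    rw [Matrix.smul_mulVec, dotProduct_smul, Complex.real_smul]
    exact mul_nonneg (Complex.zero_le_real.mpr hc) (hM.dotProduct_mulVec_nonneg x)

end Aux

/-- **Vidal's concavity criterion.** -/
theorem vidal_concavity_criterion
    {a b ι : Type*} [Fintype a] [Fintype b] [Fintype ι]
    [Nonempty a] [Nonempty b] [DecidableEq a] [DecidableEq b]
    (ψ : a × b → ℂ) (hψ : ∑ x, ‖ψ x‖ ^ 2 = 1)
    (E : ι → Matrix a a ℂ) (hE : ∑ i, (E i)ᴴ * E i = 1)
    (ρ : Matrix (a × b) (a × b) ℂ) (hρ : ρ = Matrix.vecMulVec ψ (star ψ))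
    (ρi : ι → Matrix (a × b) (a × b) ℂ)
    (hρi : ∀ i, ρi i =
      (E i ⊗ₖ (1 : Matrix b b ℂ)) * ρ * (E i ⊗ₖ (1 : Matrix b b ℂ))ᴴ)
    (p : ι → ℝ) (hp : ∀ i, p i = ((ρi i).trace).re)
    (f : Matrix b b ℂ → ℝ)
    (hf : ConcaveOn ℝ {σ : Matrix b b ℂ | σ.PosSemidef ∧ σ.trace = 1} f) :
    ∑ i ∈ Finset.univ.filter (fun i => p i ≠ 0),
        p i * f ((p i)⁻¹ • ptrA (ρi i)) ≤ f (ptrA ρ) := by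
  classical
  set φ : ι → (a × b → ℂ) := fun i => (E i ⊗ₖ (1 : Matrix b b ℂ)) *ᵥ ψ with hφ
  have hρi' : ∀ i, ρi i = Matrix.vecMulVec (φ i) (star (φ i)) := by
    intro i
    rw [hρi i, hρ, mul_vecMulVec_star]
  set σ : ι → Matrix b b ℂ := fun i => ptrA (ρi i) with hσ
  -- trace of ρi i is a nonnegative real
  have htr : ∀ i, (ρi i).trace = ((∑ x, Complex.normSq (φ i x) : ℝ) : ℂ) := by
    intro i
    rw [hρi' i]
    simp [Matrix.trace, Matrix.diag, Matrix.vecMulVec_apply, Complex.mul_conj]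
  have hpi : ∀ i, p i = ∑ x, Complex.normSq (φ i x) := by
    intro i; rw [hp i, htr i, Complex.ofReal_re]
  have hp0 : ∀ i, 0 ≤ p i := by
    intro i; rw [hpi i]
    exact Finset.sum_nonneg fun x _ => Complex.normSq_nonneg _
  have htrc : ∀ i, (ρi i).trace = ((p i : ℝ) : ℂ) := by
    intro i; rw [htr i, hpi i]
  -- vanishing terms
  have hσ0 : ∀ i, p i = 0 → σ i = 0 := by
    intro i hi
    have hz : ∀ x, Complex.normSq (φ i x) = 0 := by
      intro x
      have := (Finset.sum_eq_zero_iff_of_nonneg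
        (fun x _ => Complex.normSq_nonneg (φ i x))).mp ((hpi i).symm.trans hi)
      exact this x (Finset.mem_univ x)
    have hφz : φ i = 0 := by
      funext x
      exact Complex.normSq_eq_zero.mp (hz x)
    have : ρi i = 0 := by
      rw [hρi' i, hφz]
      ext x y; simp [Matrix.vecMulVec_apply]
    show ptrA (ρi i) = 0
    rw [this, ptrA_zero]
  -- each σ i is PSD
  have hσpsd : ∀ i, (σ i).PosSemidef := by
    intro i
    show (ptrA (ρi i)).PosSemidef
    rw [hρi' i]
    exact posSemidef_ptrA_vecMulVec _
  -- sum of the σ i is ptrA ρ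
  have hσeq : ∀ i, σ i = ptrA (ρ * (((E i)ᴴ * E i) ⊗ₖ (1 : Matrix b b ℂ))) := by
    intro i
    show ptrA (ρi i) = _
    have h1 : ρi i = (E i ⊗ₖ (1 : Matrix b b ℂ))
        * (ρ * (E i ⊗ₖ (1 : Matrix b b ℂ))ᴴ) := by
      rw [hρi i, mul_assoc]
    rw [h1, ptrA_kronecker_one_mul_comm]
    rw [mul_assoc, kronecker_one_conjTranspose, ← Matrix.mul_kronecker_mul, one_mul]
  have hsumσ : ∑ i, σ i = ptrA ρ := by
    have : ∑ i, σ i = ptrA (∑ i, ρ * (((E i)ᴴ * E i) ⊗ₖ (1 : Matrix b b ℂ))) := by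
      rw [ptrA_sum]
      exact Finset.sum_congr rfl fun i _ => hσeq i
    rw [this, ← Finset.mul_sum, ← sum_kronecker_one, hE, Matrix.one_kronecker_one, mul_one]
  -- trace of ρ is 1
  have htrρ : ρ.trace = 1 := by
    rw [hρ]
    have : (Matrix.vecMulVec ψ (star ψ)).trace = ((∑ x, Complex.normSq (ψ x) : ℝ) : ℂ) := by
      simp [Matrix.trace, Matrix.diag, Matrix.vecMulVec_apply, Complex.mul_conj]
    rw [this]
    have h2 : ∑ x, Complex.normSq (ψ x) = 1 := by
      rw [← hψ]
      exact Finset.sum_congr rfl fun x _ => (Complex.sq_norm (ψ x)).symm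
    rw [h2, Complex.ofReal_one]
  -- sum of probabilities is 1
  have hsump : ∑ i, p i = 1 := by
    have h1 : ((∑ i, p i : ℝ) : ℂ) = ∑ i, ((p i : ℝ) : ℂ) := by push_cast; ring
    have h2 : ∑ i, ((p i : ℝ) : ℂ) = ∑ i, (σ i).trace := by
      refine Finset.sum_congr rfl fun i _ => ?_
      show ((p i : ℝ) : ℂ) = (ptrA (ρi i)).trace
      rw [ptrA_trace, htrc]
    have h3 : ∑ i, (σ i).trace = (ptrA ρ).trace := by
      rw [← Matrix.trace_sum, hsumσ]
    have : ((∑ i, p i : ℝ) : ℂ) = 1 := by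
      rw [h1, h2, h3, ptrA_trace, htrρ]
    exact_mod_cast this
  -- apply Jensen's inequality
  set t := Finset.univ.filter (fun i => p i ≠ 0) with ht
  have h₀ : ∀ i ∈ t, 0 ≤ p i := fun i _ => hp0 i
  have h₁ : ∑ i ∈ t, p i = 1 := by
    rw [ht, Finset.sum_filter_ne_zero, hsump]
  have hmem : ∀ i ∈ t, (p i)⁻¹ • σ i ∈
      {σ : Matrix b b ℂ | σ.PosSemidef ∧ σ.trace = 1} := by
    intro i hi
    have hne : p i ≠ 0 := (Finset.mem_filter.mp hi).2
    constructor
    · exact posSemidef_real_smul (hσpsd i) (inv_nonneg.mpr (hp0 i))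
    · show ((p i)⁻¹ • ptrA (ρi i)).trace = 1
      rw [Matrix.trace_smul, ptrA_trace, htrc i]
      rw [Complex.real_smul, ← Complex.ofReal_mul, inv_mul_cancel₀ hne, Complex.ofReal_one]
  have hjensen := hf.le_map_sum h₀ h₁ hmem
  have hLHS : ∑ i ∈ t, p i • f ((p i)⁻¹ • σ i)
      = ∑ i ∈ t, p i * f ((p i)⁻¹ • ptrA (ρi i)) := by
    refine Finset.sum_congr rfl fun i _ => rfl
  have hRHS : ∑ i ∈ t, p i • ((p i)⁻¹ • σ i) = ptrA ρ := by
    have h1 : ∑ i ∈ t, p i • ((p i)⁻¹ • σ i) = ∑ i ∈ t, σ i := by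
      refine Finset.sum_congr rfl fun i hi => ?_
      have hne : p i ≠ 0 := (Finset.mem_filter.mp hi).2
      rw [smul_smul, mul_inv_cancel₀ hne, one_smul]
    rw [h1, ← hsumσ]
    refine Finset.sum_subset (Finset.filter_subset _ _) fun i _ hi => ?_
    apply hσ0
    by_contra h
    exact hi (Finset.mem_filter.mpr ⟨Finset.mem_univ i, h⟩)
  rw [hLHS, hRHS] at hjensen
  exact hjensen
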